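/- arXiv:2008.08344 — 3 statements merged into one kernel-verified Lean document; each statement's English description precedes it below -/
import Mathlib

section
/- Let V_0 = {(x,z) ∈ F_q^{2d} × F_q^{2d} : ||x|| − ||z|| = 0} ⊆ F_q^{4d}. Then for M ∈ F_q^{4d}, the Fourier transform satisfies: V̂_0(M) = q^{-1}δ_0(M) + q^{-2d-1}(q−1) if ||M||_* = 0, and V̂_0(M) = −q^{-2d-1} if ||M||_* ≠ 0. -/
set_option linter.unusedSectionVars false
set_option linter.unusedVariables false

open Finset

/-- `||x|| = ∑ x_i²`. -/
def nrm {F : Type} [Field F] {n : ℕ} (x : Fin n → F) : F := ∑ i, x i ^ 2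

/-- `||X||_* = ||x|| - ||z||` for `X = (x, z) ∈ F_q^{2d} × F_q^{2d} = F_q^{4d}`. -/
def nrmStar {F : Type} [Field F] {n : ℕ} (X : (Fin n → F) × (Fin n → F)) : F :=
  nrm X.1 - nrm X.2

/-- Dot product on `F_q^{2d} × F_q^{2d} = F_q^{4d}`. -/
def dotP {F : Type} [Field F] {n : ℕ} (M X : (Fin n → F) × (Fin n → F)) : F :=
  (∑ i, M.1 i * X.1 i) + ∑ i, M.2 i * X.2 i

variable {F : Type} [Field F] [Fintype F] [DecidableEq F]

lemma myMapSum (χ : AddChar F ℂ) {ι : Type*} (s : Finset ι) (f : ι → F) :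
    χ (∑ i ∈ s, f i) = ∏ i ∈ s, χ (f i) := by
  classical
  induction s using Finset.cons_induction with
  | empty => simp
  | cons a s ha ih => rw [Finset.sum_cons, Finset.prod_cons, AddChar.map_add_eq_mul, ih]

lemma myOrth (χ : AddChar F ℂ) (hχ : χ ≠ 1) (c : F) :
    ∑ t : F, χ (t * c) = if c = 0 then (Fintype.card F : ℂ) else 0 := by
  split_ifs with h
  · simp [h]
  · have h0 : ∑ t : F, χ t = 0 := by
      rw [AddChar.sum_eq_zero_iff_ne_zero]
      rwa [AddChar.one_eq_zero] at hχ
    rw [← h0]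
    exact Fintype.sum_equiv (Equiv.mulRight₀ c h) _ _ (fun t => rfl)

lemma myPlane (χ : AddChar F ℂ) (hχ : χ ≠ 1) {t : F} (ht : t ≠ 0) (α β : F) :
    ∑ p : F × F, χ (t * (p.1 * p.2) + (α * p.1 + β * p.2))
      = (Fintype.card F : ℂ) * χ (-(α * β) * t⁻¹) := by
  rw [Fintype.sum_prod_type]
  have harg : ∀ u v : F, t * (u * v) + (α * u + β * v) = α * u + v * (t * u + β) := by
    intros; ring
  simp_rw [harg, AddChar.map_add_eq_mul, ← Finset.mul_sum, myOrth χ hχ]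
  have hcond : ∀ u : F, (t * u + β = 0) ↔ (u = -β * t⁻¹) := by
    intro u
    constructor
    · intro h; field_simp; linear_combination h
    · intro h; subst h; field_simp; ring
  simp_rw [mul_ite, mul_zero]
  rw [Finset.sum_congr rfl (fun u _ => by rw [if_congr (hcond u) rfl rfl]),
    Finset.sum_ite_eq' univ (-β * t⁻¹) (fun u => χ (α * u) * (Fintype.card F : ℂ))]
  simp only [mem_univ, if_true]
  rw [mul_comm]
  congr 2
  ring

lemma myDelta (χ : AddChar F ℂ) (hχ : χ ≠ 1) {n : ℕ} (c : Fin n → F) :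
    ∑ x : Fin n → F, χ (∑ i, c i * x i)
      = if (∀ i, c i = 0) then (Fintype.card F : ℂ) ^ n else 0 := by
  simp_rw [myMapSum χ]
  rw [← Fintype.prod_sum (fun i (s : F) => χ (c i * s))]
  have : ∀ i : Fin n, ∑ s : F, χ (c i * s) = if c i = 0 then (Fintype.card F : ℂ) else 0 := by
    intro i
    simp_rw [mul_comm (c i)]
    exact myOrth χ hχ (c i)
  rw [Finset.prod_congr rfl (fun i _ => this i)]
  split_ifs with h
  · rw [Finset.prod_congr rfl (fun i _ => if_pos (h i))]
    simp
  · push_neg at h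
    obtain ⟨i, hi⟩ := h
    exact Finset.prod_eq_zero (mem_univ i) (by rw [if_neg hi])

lemma myDelta2 (χ : AddChar F ℂ) (hχ : χ ≠ 1) {n : ℕ} (M : (Fin n → F) × (Fin n → F)) :
    ∑ X : (Fin n → F) × (Fin n → F), χ (-(dotP M X))
      = if M = 0 then (Fintype.card F : ℂ) ^ (2 * n) else 0 := by
  rw [Fintype.sum_prod_type]
  have harg : ∀ x z : Fin n → F, -(dotP M (x, z)) =
      (∑ i, (-M.1 i) * x i) + ∑ i, (-M.2 i) * z i := by
    intro x z
    simp only [dotP, neg_add, ← Finset.sum_neg_distrib]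
    congr 1 <;> exact Finset.sum_congr rfl (fun i _ => by ring)
  simp_rw [harg, AddChar.map_add_eq_mul]
  rw [← Finset.sum_mul_sum, myDelta χ hχ, myDelta χ hχ]
  have hc1 : (∀ i, -M.1 i = 0) ↔ M.1 = 0 := by simp [funext_iff]
  have hc2 : (∀ i, -M.2 i = 0) ↔ M.2 = 0 := by simp [funext_iff]
  rw [if_congr hc1 rfl rfl, if_congr hc2 rfl rfl]
  by_cases h1 : M.1 = 0 <;> by_cases h2 : M.2 = 0 <;>
    simp [h1, h2, Prod.ext_iff, two_mul, pow_add]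

lemma myTsum (χ : AddChar F ℂ) (hχ : χ ≠ 1) (c : F) :
    ∑ t ∈ univ.filter (fun t : F => t ≠ 0), χ (c * t⁻¹)
      = if c = 0 then (Fintype.card F : ℂ) - 1 else -1 := by
  have hcard : 1 ≤ Fintype.card F := Fintype.card_pos
  have hsum0 : ∑ s ∈ univ.filter (fun s : F => s ≠ 0), χ s = -1 := by
    have h0 : ∑ s : F, χ s = 0 := by
      rw [AddChar.sum_eq_zero_iff_ne_zero]; rwa [AddChar.one_eq_zero] at hχ
    rw [Finset.filter_ne', Finset.sum_erase_eq_sub (mem_univ 0), h0, AddChar.map_zero_eq_one]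
    ring
  split_ifs with h
  · subst h
    simp only [zero_mul, AddChar.map_zero_eq_one, Finset.sum_const, nsmul_eq_mul, mul_one]
    rw [Finset.filter_ne', Finset.card_erase_of_mem (mem_univ 0), Finset.card_univ]
    push_cast [hcard]
    ring
  · rw [← hsum0]
    refine Finset.sum_nbij' (fun t => c * t⁻¹) (fun s => c * s⁻¹) ?_ ?_ ?_ ?_ ?_
    · intro t ht
      simp only [mem_filter, mem_univ, true_and] at ht ⊢
      exact mul_ne_zero h (inv_ne_zero ht)
    · intro s hs
      simp only [mem_filter, mem_univ, true_and] at hs ⊢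
      exact mul_ne_zero h (inv_ne_zero hs)
    · intro t ht
      simp only [mem_filter, mem_univ, true_and] at ht
      field_simp
    · intro s hs
      simp only [mem_filter, mem_univ, true_and] at hs
      field_simp
    · intro t ht; rfl

lemma myS (χ : AddChar F ℂ) (hχ : χ ≠ 1) (h2 : (2 : F) ≠ 0) {n : ℕ}
    (M : (Fin n → F) × (Fin n → F)) {t : F} (ht : t ≠ 0) :
    ∑ X : (Fin n → F) × (Fin n → F), χ (t * nrmStar X - dotP M X)
      = (Fintype.card F : ℂ) ^ n
          * χ (-(nrmStar M) * ((2 : F)⁻¹) ^ 2 * t⁻¹) := by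
  have h21 : (2 : F) * (2 : F)⁻¹ = 1 := mul_inv_cancel₀ h2
  set α : Fin n → F := fun i => -(M.1 i + M.2 i) * (2 : F)⁻¹ with hα
  set β : Fin n → F := fun i => -(M.1 i - M.2 i) * (2 : F)⁻¹ with hβ
  set f : (Fin n → F) × (Fin n → F) → (Fin n → F) × (Fin n → F) :=
    fun p => (fun i => (p.1 i + p.2 i) * (2 : F)⁻¹,
              fun i => (p.1 i - p.2 i) * (2 : F)⁻¹) with hf
  have hbij : Function.Bijective f := by
    rw [Function.bijective_iff_has_inverse]
    refine ⟨fun p => (fun i => p.1 i + p.2 i, fun i => p.1 i - p.2 i), ?_, ?_⟩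
    · intro p
      refine Prod.ext (funext fun i => ?_) (funext fun i => ?_) <;>
        · simp only [hf]
          field_simp
          ring
    · intro p
      refine Prod.ext (funext fun i => ?_) (funext fun i => ?_) <;>
        · simp only [hf]
          field_simp
          ring
  rw [← hbij.sum_comp (fun X => χ (t * nrmStar X - dotP M X))]
  have harg : ∀ p : (Fin n → F) × (Fin n → F),
      t * nrmStar (f p) - dotP M (f p)
        = ∑ i, (t * (p.1 i * p.2 i) + (α i * p.1 i + β i * p.2 i)) := by
    intro p
    simp only [hf, nrmStar, nrm, dotP]
    rw [← Finset.sum_sub_distrib, Finset.mul_sum, ← Finset.sum_add_distrib,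
      ← Finset.sum_sub_distrib]
    refine Finset.sum_congr rfl fun i _ => ?_
    simp only [hα, hβ]
    field_simp
    ring
  simp_rw [harg, myMapSum χ]
  rw [← Fintype.sum_equiv (Equiv.arrowProdEquivProdArrow (Fin n) (fun _ => F) (fun _ => F))
    (fun w : Fin n → F × F => ∏ i, χ (t * ((w i).1 * (w i).2)
      + (α i * (w i).1 + β i * (w i).2)))
    (fun p => ∏ i, χ (t * (p.1 i * p.2 i) + (α i * p.1 i + β i * p.2 i)))
    (fun w => rfl)]
  rw [← Fintype.prod_sum
    (fun i (p : F × F) => χ (t * (p.1 * p.2) + (α i * p.1 + β i * p.2)))]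
  rw [Finset.prod_congr rfl (fun i _ => myPlane χ hχ ht (α i) (β i)),
    Finset.prod_mul_distrib, Finset.prod_const, Finset.card_univ, Fintype.card_fin,
    ← myMapSum χ]
  congr 2
  rw [← Finset.sum_mul]
  congr 1
  have hterm : ∀ i, -(α i * β i) = -((M.1 i ^ 2 - M.2 i ^ 2) * ((2 : F)⁻¹) ^ 2) := by
    intro i; simp only [hα, hβ]; ring
  rw [Finset.sum_congr rfl fun i _ => hterm i]
  simp only [nrmStar, nrm]
  rw [← Finset.sum_sub_distrib, neg_mul, Finset.sum_mul, ← Finset.sum_neg_distrib]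

lemma myKey (χ : AddChar F ℂ) (hχ : χ ≠ 1) (h2 : (2 : F) ≠ 0) {n : ℕ}
    (M : (Fin n → F) × (Fin n → F)) :
    (Fintype.card F : ℂ) *
        ∑ X ∈ univ.filter (fun X : (Fin n → F) × (Fin n → F) => nrmStar X = 0),
          χ (-(dotP M X))
      = (if M = 0 then (Fintype.card F : ℂ) ^ (2 * n) else 0)
          + (Fintype.card F : ℂ) ^ n
              * (if nrmStar M = 0 then (Fintype.card F : ℂ) - 1 else -1) := by
  classical
  set q : ℂ := (Fintype.card F : ℂ) with hq
  have hswap : q * ∑ X ∈ univ.filter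
        (fun X : (Fin n → F) × (Fin n → F) => nrmStar X = 0), χ (-(dotP M X))
      = ∑ X : (Fin n → F) × (Fin n → F), ∑ t : F, χ (t * nrmStar X - dotP M X) := by
    have hinner : ∀ X : (Fin n → F) × (Fin n → F),
        ∑ t : F, χ (t * nrmStar X - dotP M X)
          = (if nrmStar X = 0 then q else 0) * χ (-(dotP M X)) := by
      intro X
      simp_rw [sub_eq_add_neg, AddChar.map_add_eq_mul, ← Finset.sum_mul]
      rw [myOrth χ hχ (nrmStar X)]
    simp_rw [hinner]
    rw [Finset.sum_filter, Finset.mul_sum]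
    refine Finset.sum_congr rfl fun X _ => by split_ifs <;> simp
  rw [hswap, Finset.sum_comm]
  rw [← Finset.add_sum_erase univ
    (fun t => ∑ X : (Fin n → F) × (Fin n → F), χ (t * nrmStar X - dotP M X))
    (mem_univ (0 : F))]
  have ht0 : ∑ X : (Fin n → F) × (Fin n → F), χ ((0 : F) * nrmStar X - dotP M X)
      = if M = 0 then q ^ (2 * n) else 0 := by
    simp_rw [zero_mul, zero_sub]
    exact myDelta2 χ hχ M
  rw [ht0]
  congr 1
  have hrest : ∀ t ∈ univ.erase (0 : F),
      ∑ X : (Fin n → F) × (Fin n → F), χ (t * nrmStar X - dotP M X)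
        = q ^ n * χ ((-(nrmStar M) * ((2 : F)⁻¹) ^ 2) * t⁻¹) := by
    intro t ht
    exact myS χ hχ h2 M (Finset.ne_of_mem_erase ht)
  rw [Finset.sum_congr rfl hrest, ← Finset.mul_sum, ← Finset.filter_ne']
  rw [myTsum χ hχ (-(nrmStar M) * ((2 : F)⁻¹) ^ 2)]
  congr 1
  have : (-(nrmStar M) * ((2 : F)⁻¹) ^ 2 = 0) ↔ (nrmStar M = 0) := by
    rw [mul_eq_zero, neg_eq_zero]
    simp [pow_eq_zero_iff, inv_eq_zero, h2]
  rw [if_congr this rfl rfl]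

/-- The Fourier transform of the variety `V₀ = {X ∈ F_q^{4d} : ||X||_* = 0}`:
`V̂₀(M) = q^{-1} δ₀(M) + q^{-2d-1}(q-1)` if `||M||_* = 0`, and
`V̂₀(M) = -q^{-2d-1}` if `||M||_* ≠ 0`. -/
theorem stmt_10 {F : Type} [Field F] [Fintype F] [DecidableEq F]
    (hodd : Odd (Fintype.card F)) (χ : AddChar F ℂ) (hχ : χ ≠ 1)
    (d : ℕ) (hd : 1 ≤ d) (M : (Fin (2 * d) → F) × (Fin (2 * d) → F)) :
    (nrmStar M = 0 →
      ((Fintype.card F : ℂ) ^ (4 * d))⁻¹ *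
          ∑ X ∈ univ.filter (fun X : (Fin (2 * d) → F) × (Fin (2 * d) → F) =>
              nrmStar X = 0), χ (-(dotP M X))
        = (if M = 0 then (Fintype.card F : ℂ)⁻¹ else 0)
            + (Fintype.card F : ℂ) ^ (-(2 * (d : ℤ)) - 1) * ((Fintype.card F : ℂ) - 1)) ∧
    (nrmStar M ≠ 0 →
      ((Fintype.card F : ℂ) ^ (4 * d))⁻¹ *
          ∑ X ∈ univ.filter (fun X : (Fin (2 * d) → F) × (Fin (2 * d) → F) =>
              nrmStar X = 0), χ (-(dotP M X))
        = -(Fintype.card F : ℂ) ^ (-(2 * (d : ℤ)) - 1)) := by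
  classical
  have h2 : (2 : F) ≠ 0 := by
    intro h
    have hdvd : ringChar F ∣ 2 := by
      rw [← ringChar.spec F 2]
      exact_mod_cast h
    have hchar : ringChar F = 2 := by
      rcases (Nat.prime_two.eq_one_or_self_of_dvd _ hdvd) with h1 | h1
      · exact absurd h1 (CharP.ringChar_ne_one)
      · exact h1
    have heven : Fintype.card F % 2 = 0 := FiniteField.even_card_of_char_two hchar
    rw [Nat.odd_iff] at hodd
    omega
  set q : ℂ := (Fintype.card F : ℂ) with hq
  have hq0 : q ≠ 0 := Nat.cast_ne_zero.mpr Fintype.card_ne_zero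
  have key := myKey χ hχ h2 M
  have hzpow : q ^ (-(2 * (d : ℤ)) - 1) = (q ^ (2 * d + 1))⁻¹ := by
    rw [← zpow_natCast q (2 * d + 1), ← zpow_neg]
    congr 1
    push_cast
    ring
  have hexp : 2 * (2 * d) = 4 * d := by ring
  rw [hexp] at key
  constructor
  · intro h0
    rw [h0, if_pos rfl] at key
    have hT : ∑ X ∈ univ.filter (fun X : (Fin (2 * d) → F) × (Fin (2 * d) → F) =>
          nrmStar X = 0), χ (-(dotP M X))
        = ((if M = 0 then q ^ (4 * d) else 0) + q ^ (2 * d) * (q - 1)) / q := by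
      rw [eq_div_iff hq0, mul_comm _ q, key]
    rw [hT, hzpow]
    by_cases hM : M = 0
    · rw [if_pos hM, if_pos hM]
      field_simp
      ring
    · rw [if_neg hM, if_neg hM]
      field_simp
      ring
  · intro h0
    rw [if_neg h0] at key
    have hM : M ≠ 0 := by
      intro hM
      apply h0
      rw [hM]
      simp [nrmStar, nrm]
    rw [if_neg hM] at key
    have hT : ∑ X ∈ univ.filter (fun X : (Fin (2 * d) → F) × (Fin (2 * d) → F) =>
          nrmStar X = 0), χ (-(dotP M X))
        = (0 + q ^ (2 * d) * (-1)) / q := by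
      rw [eq_div_iff hq0, mul_comm _ q, key]
    rw [hT, hzpow]
    field_simp
    ring
end

section
/- Suppose d ≡ 2 (mod 4) and q ≡ 3 (mod 4). For any F ⊆ F_q^d, the zero-radius sphere restriction satisfies M_0(F) := Σ_{m ∈ S_0^{d-1}} |F̂(m)|² ≤ q^{-d-1}|F| + q^{(-3d-2)/2}|F|². -/
open Finset

/-- The Fourier transform of the indicator of `A ⊆ F_q^d`. -/
noncomputable def ftSet {F : Type} [Field F] [Fintype F] {d : ℕ} (χ : AddChar F ℂ)
    (A : Finset (Fin d → F)) (m : Fin d → F) : ℂ :=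
  ((Fintype.card F : ℂ) ^ d)⁻¹ * ∑ x ∈ A, χ (-(∑ i, m i * x i))

namespace Stmt13Aux

open AddChar

variable {F : Type} [Field F] [Fintype F] [DecidableEq F]

lemma char_ne_two (hodd : Odd (Fintype.card F)) : ringChar F ≠ 2 := by
  intro h
  have h1 := FiniteField.even_card_of_char_two h
  have h2 := Nat.odd_iff.mp hodd
  omega

/-- The quadratic character of `F`, valued in `ℂ`. -/
noncomputable def qc (F : Type) [Field F] [Fintype F] [DecidableEq F] : MulChar F ℂ :=
  (quadraticChar F).ringHomComp (Int.castRingHom ℂ)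

lemma qc_apply (a : F) : qc F a = ((quadraticChar F a : ℤ) : ℂ) := rfl

lemma qc_ne_one (hF2 : ringChar F ≠ 2) : qc F ≠ 1 := by
  obtain ⟨a, ha⟩ := quadraticChar_exists_neg_one hF2
  have ha0 : a ≠ 0 := by
    intro h
    rw [h, MulChar.map_zero] at ha
    norm_num at ha
  intro h
  have := congrArg (fun ψ : MulChar F ℂ => ψ a) h
  simp only [qc_apply, ha, MulChar.one_apply (Ne.isUnit ha0)] at this
  norm_num at this

lemma qc_quad : (qc F).IsQuadratic := (quadraticChar_isQuadratic F).comp _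

lemma qc_mul_self {t : F} (ht : t ≠ 0) : qc F t * qc F t = 1 := by
  rcases qc_quad (F := F) t with h | h | h
  · exfalso
    rw [qc_apply] at h
    have : quadraticChar F t = 0 := by exact_mod_cast h
    rw [quadraticChar_eq_zero_iff] at this
    exact ht this
  · rw [h]; ring
  · rw [h]; ring

lemma addChar_map_sum {ι : Type*} (ψ : AddChar F ℂ) (s : Finset ι) (f : ι → F) :
    ψ (∑ i ∈ s, f i) = ∏ i ∈ s, ψ (f i) := by
  induction s using Finset.cons_induction with
  | empty => simp
  | cons a s ha ih => rw [Finset.sum_cons, Finset.prod_cons, map_add_eq_mul, ih]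

variable (χ : AddChar F ℂ)

/-- Orthogonality. -/
lemma sum_char_mul (hχ : χ ≠ 1) (s : F) :
    ∑ t : F, χ (t * s) = if s = 0 then (Fintype.card F : ℂ) else 0 := by
  have := AddChar.sum_mulShift s (AddChar.IsPrimitive.of_ne_one hχ)
  rwa [Nat.cast_ite, Nat.cast_zero] at this

/-- Orthogonality for the dot product on `F^d`. -/
lemma sum_char_dot (hχ : χ ≠ 1) {d : ℕ} (v : Fin d → F) :
    ∑ m : Fin d → F, χ (∑ i, m i * v i)
      = if v = 0 then ((Fintype.card F : ℂ)) ^ d else 0 := by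
  have h1 : ∑ m : Fin d → F, χ (∑ i, m i * v i)
      = ∏ i, ∑ u : F, χ (u * v i) := by
    rw [Finset.prod_univ_sum, ← Fintype.piFinset_univ]
    exact Finset.sum_congr rfl fun m _ => addChar_map_sum χ univ _
  rw [h1]
  by_cases hv : v = 0
  · subst hv
    simp only [Pi.zero_apply, mul_zero, AddChar.map_zero_eq_one, if_true]
    simp [Finset.card_univ]
  · rw [if_neg hv]
    obtain ⟨i, hi⟩ : ∃ i, v i ≠ 0 := by
      by_contra h
      push_neg at h
      exact hv (funext h)
    refine Finset.prod_eq_zero (Finset.mem_univ i) ?_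
    rw [sum_char_mul χ hχ, if_neg hi]

/-- The `t`-dilated quadratic Gauss sum. -/
lemma sum_char_sq (hF2 : ringChar F ≠ 2) (hχ : χ ≠ 1) {t : F} (ht : t ≠ 0) :
    ∑ u : F, χ (t * u ^ 2) = qc F t * gaussSum (qc F) χ := by
  have hcount : ∀ s : F,
      ((univ.filter fun u : F => u ^ 2 = s).card : ℂ) = qc F s + 1 := by
    intro s
    have := quadraticChar_card_sqrts hF2 s
    rw [Set.toFinset_setOf] at this
    rw [qc_apply]
    exact_mod_cast congrArg (fun n : ℤ => (n : ℂ)) this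
  have key : ∑ u : F, χ (t * u ^ 2)
      = ∑ s : F, ((univ.filter fun u : F => u ^ 2 = s).card : ℂ) * χ (t * s) := by
    rw [← Finset.sum_fiberwise_of_maps_to (g := fun u : F => u ^ 2)
      (fun x _ => Finset.mem_univ _) (fun u => χ (t * u ^ 2))]
    refine Finset.sum_congr rfl fun s _ => ?_
    rw [show ∑ u ∈ univ.filter (fun u : F => u ^ 2 = s), χ (t * u ^ 2)
        = ∑ _u ∈ univ.filter (fun u : F => u ^ 2 = s), χ (t * s) from
      Finset.sum_congr rfl fun u hu => by rw [(Finset.mem_filter.mp hu).2],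
      Finset.sum_const, nsmul_eq_mul]
  rw [key]
  have split : ∑ s : F, ((univ.filter fun u : F => u ^ 2 = s).card : ℂ) * χ (t * s)
      = (∑ s : F, qc F s * χ (t * s)) + ∑ s : F, χ (t * s) := by
    rw [← Finset.sum_add_distrib]
    refine Finset.sum_congr rfl fun s _ => ?_
    rw [hcount s]; ring
  rw [split]
  have hcomm : ∑ s : F, χ (t * s) = ∑ s : F, χ (s * t) :=
    Finset.sum_congr rfl fun s _ => by rw [mul_comm]
  rw [hcomm, sum_char_mul χ hχ, if_neg ht, add_zero]
  have hgs : ∑ s : F, qc F s * χ (t * s) = gaussSum (qc F) (AddChar.mulShift χ t) := by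
    unfold gaussSum
    simp [AddChar.mulShift_apply]
  rw [hgs]
  have hu : IsUnit t := Ne.isUnit ht
  have hms := gaussSum_mulShift (qc F) χ hu.unit
  have hval : (hu.unit : F) = t := rfl
  rw [hval] at hms
  calc gaussSum (qc F) (AddChar.mulShift χ t)
      = (qc F t * qc F t) * gaussSum (qc F) (AddChar.mulShift χ t) := by
        rw [qc_mul_self ht, one_mul]
    _ = qc F t * (qc F t * gaussSum (qc F) (AddChar.mulShift χ t)) := by ring
    _ = qc F t * gaussSum (qc F) χ := by rw [hms]

/-- Completing the square. -/
lemma sum_complete (hF2 : ringChar F ≠ 2) (hχ : χ ≠ 1) {t : F} (ht : t ≠ 0) (b : F) :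
    ∑ u : F, χ (t * u ^ 2 + b * u)
      = χ (-(b ^ 2) / (4 * t)) * (qc F t * gaussSum (qc F) χ) := by
  have h2 : (2 : F) ≠ 0 := Ring.two_ne_zero hF2
  have h4 : (4 : F) ≠ 0 := by
    have : (4 : F) = 2 * 2 := by norm_num
    rw [this]; exact mul_ne_zero h2 h2
  have key : ∀ w : F, t * (w - b / (2 * t)) ^ 2 + b * (w - b / (2 * t))
      = t * w ^ 2 + -(b ^ 2) / (4 * t) := by
    intro w
    field_simp
    ring
  have step1 : ∑ u : F, χ (t * u ^ 2 + b * u)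
      = ∑ w : F, χ (t * (w - b / (2 * t)) ^ 2 + b * (w - b / (2 * t))) :=
    (Fintype.sum_equiv (Equiv.subRight (b / (2 * t)))
      (fun w => χ (t * (w - b / (2 * t)) ^ 2 + b * (w - b / (2 * t))))
      (fun u => χ (t * u ^ 2 + b * u)) (fun w => rfl)).symm
  rw [step1]
  calc ∑ w : F, χ (t * (w - b / (2 * t)) ^ 2 + b * (w - b / (2 * t)))
      = ∑ w : F, χ (-(b ^ 2) / (4 * t)) * χ (t * w ^ 2) := by
        refine Finset.sum_congr rfl fun w _ => ?_
        rw [key w, add_comm, map_add_eq_mul]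
    _ = χ (-(b ^ 2) / (4 * t)) * (qc F t * gaussSum (qc F) χ) := by
        rw [← Finset.mul_sum, sum_char_sq χ hF2 hχ ht]

/-- Completing the square, vector version. -/
lemma sum_vec (hF2 : ringChar F ≠ 2) (hχ : χ ≠ 1) {t : F} (ht : t ≠ 0)
    {d : ℕ} (v : Fin d → F) :
    ∑ m : Fin d → F, χ (t * (∑ i, m i ^ 2) + ∑ i, m i * v i)
      = χ (-(∑ i, v i ^ 2) / (4 * t)) * (qc F t * gaussSum (qc F) χ) ^ d := by
  have h1 : ∀ m : Fin d → F,
      t * (∑ i, m i ^ 2) + ∑ i, m i * v i = ∑ i, (t * m i ^ 2 + v i * m i) := by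
    intro m
    rw [Finset.sum_add_distrib, Finset.mul_sum]
    congr 1
    exact Finset.sum_congr rfl fun i _ => mul_comm _ _
  calc ∑ m : Fin d → F, χ (t * (∑ i, m i ^ 2) + ∑ i, m i * v i)
      = ∑ m : Fin d → F, ∏ i, χ (t * m i ^ 2 + v i * m i) := by
        refine Finset.sum_congr rfl fun m _ => ?_
        rw [h1 m, addChar_map_sum]
    _ = ∏ i, ∑ u : F, χ (t * u ^ 2 + v i * u) := by
        rw [Finset.prod_univ_sum, Fintype.piFinset_univ]
    _ = ∏ i, (χ (-(v i ^ 2) / (4 * t)) * (qc F t * gaussSum (qc F) χ)) := by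
        exact Finset.prod_congr rfl fun i _ => sum_complete χ hF2 hχ ht (v i)
    _ = (∏ i, χ (-(v i ^ 2) / (4 * t))) * (qc F t * gaussSum (qc F) χ) ^ d := by
        rw [Finset.prod_mul_distrib, Finset.prod_const, Finset.card_univ, Fintype.card_fin]
    _ = χ (-(∑ i, v i ^ 2) / (4 * t)) * (qc F t * gaussSum (qc F) χ) ^ d := by
        congr 1
        rw [← addChar_map_sum]
        congr 1
        rw [← Finset.sum_div, ← Finset.sum_neg_distrib]

/-- Summing the additive character over the zero sphere. -/
lemma sphere_sum (hF2 : ringChar F ≠ 2) (hχ : χ ≠ 1) {d : ℕ} (hd : d % 2 = 0)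
    (v : Fin d → F) :
    ∑ m ∈ univ.filter (fun m : Fin d → F => ∑ i, m i ^ 2 = 0), χ (∑ i, m i * v i)
      = (Fintype.card F : ℂ)⁻¹ *
        ((if v = 0 then ((Fintype.card F : ℂ)) ^ d else 0)
          + gaussSum (qc F) χ ^ d *
            ((if (∑ i, v i ^ 2) = 0 then (Fintype.card F : ℂ) else 0) - 1)) := by
  have hq0 : (Fintype.card F : ℂ) ≠ 0 := Nat.cast_ne_zero.mpr Fintype.card_ne_zero
  have h4 : (4 : F) ≠ 0 := by
    have h2 : (2 : F) ≠ 0 := Ring.two_ne_zero hF2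
    have : (4 : F) = 2 * 2 := by norm_num
    rw [this]; exact mul_ne_zero h2 h2
  have ind : ∀ s : F, (if s = 0 then (1 : ℂ) else 0)
      = (Fintype.card F : ℂ)⁻¹ * ∑ t : F, χ (t * s) := by
    intro s
    rw [sum_char_mul χ hχ s]
    split_ifs with h
    · rw [inv_mul_cancel₀ hq0]
    · rw [mul_zero]
  -- step 1: write the filtered sum using the indicator
  have step1 : ∑ m ∈ univ.filter (fun m : Fin d → F => ∑ i, m i ^ 2 = 0),
        χ (∑ i, m i * v i)
      = (Fintype.card F : ℂ)⁻¹ * ∑ t : F, ∑ m : Fin d → F,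
          χ (t * (∑ i, m i ^ 2) + ∑ i, m i * v i) := by
    rw [Finset.sum_filter]
    have : ∀ m : Fin d → F,
        (if (∑ i, m i ^ 2) = 0 then χ (∑ i, m i * v i) else 0)
          = (Fintype.card F : ℂ)⁻¹ *
            ∑ t : F, χ (t * (∑ i, m i ^ 2) + ∑ i, m i * v i) := by
      intro m
      have : (if (∑ i, m i ^ 2) = 0 then (1 : ℂ) else 0) * χ (∑ i, m i * v i)
          = (if (∑ i, m i ^ 2) = 0 then χ (∑ i, m i * v i) else 0) := by
        split_ifs <;> simp
      rw [← this, ind (∑ i, m i ^ 2), mul_assoc, Finset.sum_mul]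
      congr 1
      refine Finset.sum_congr rfl fun t _ => ?_
      rw [map_add_eq_mul]
    rw [Finset.sum_congr rfl fun m _ => this m, ← Finset.mul_sum, Finset.sum_comm]
  rw [step1]
  congr 1
  -- split off t = 0
  rw [← Finset.sum_erase_add _ _ (Finset.mem_univ (0 : F))]
  have hzero : ∑ m : Fin d → F, χ ((0 : F) * (∑ i, m i ^ 2) + ∑ i, m i * v i)
      = if v = 0 then ((Fintype.card F : ℂ)) ^ d else 0 := by
    rw [← sum_char_dot χ hχ v]
    exact Finset.sum_congr rfl fun m _ => by rw [zero_mul, zero_add]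
  rw [hzero, add_comm]
  congr 1
  -- nonzero t
  have hterm : ∀ t ∈ univ.erase (0 : F),
      ∑ m : Fin d → F, χ (t * (∑ i, m i ^ 2) + ∑ i, m i * v i)
        = gaussSum (qc F) χ ^ d * χ ((-(∑ i, v i ^ 2) / 4) * t⁻¹) := by
    intro t htm
    have ht : t ≠ 0 := Finset.ne_of_mem_erase htm
    rw [sum_vec χ hF2 hχ ht v, mul_pow]
    have hqcd : qc F t ^ d = 1 := by
      rcases Nat.eq_zero_or_pos d with h | h
      · rw [h, pow_zero]
      · have heven : Even d := Nat.even_iff.mpr hd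
        have hpow := MulChar.IsQuadratic.pow_even (qc_quad (F := F)) heven
        rw [← MulChar.pow_apply' _ (Nat.pos_iff_ne_zero.mp h), hpow,
          MulChar.one_apply (Ne.isUnit ht)]
    rw [hqcd, one_mul]
    have harg : -(∑ i, v i ^ 2) / (4 * t) = (-(∑ i, v i ^ 2) / 4) * t⁻¹ := by
      field_simp
    rw [harg]
    ring
  rw [Finset.sum_congr rfl hterm, ← Finset.mul_sum]
  congr 1
  -- the sum over nonzero t of χ(c * t⁻¹)
  set c : F := -(∑ i, v i ^ 2) / 4 with hc
  have hbij : ∑ t ∈ univ.erase (0 : F), χ (c * t⁻¹)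
      = ∑ t ∈ univ.erase (0 : F), χ (c * t) := by
    refine Finset.sum_nbij' (fun t => t⁻¹) (fun t => t⁻¹) ?_ ?_ ?_ ?_ ?_
    · intro t htm
      rw [Finset.mem_erase] at htm ⊢
      exact ⟨inv_ne_zero htm.1, Finset.mem_univ _⟩
    · intro t htm
      rw [Finset.mem_erase] at htm ⊢
      exact ⟨inv_ne_zero htm.1, Finset.mem_univ _⟩
    · intro t _; exact inv_inv t
    · intro t _; exact inv_inv t
    · intro t _; rfl
  rw [hbij]
  have hsplit : ∑ t ∈ univ.erase (0 : F), χ (c * t)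
      = (∑ t : F, χ (c * t)) - χ (c * 0) := by
    rw [← Finset.sum_erase_add _ _ (Finset.mem_univ (0 : F))]
    ring
  have hc0 : c = 0 ↔ (∑ i, v i ^ 2) = 0 := by
    rw [hc, div_eq_zero_iff, neg_eq_zero]
    constructor
    · rintro (h | h)
      · exact h
      · exact absurd h h4
    · intro h; exact Or.inl h
  rw [hsplit, mul_zero, AddChar.map_zero_eq_one]
  have : ∑ t : F, χ (c * t) = if (∑ i, v i ^ 2) = 0 then (Fintype.card F : ℂ) else 0 := by
    have := sum_char_mul χ hχ c
    have hcomm : ∑ t : F, χ (c * t) = ∑ t : F, χ (t * c) :=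
      Finset.sum_congr rfl fun t _ => by rw [mul_comm]
    rw [hcomm, this]
    by_cases h : (∑ i, v i ^ 2) = 0
    · rw [if_pos (hc0.mpr h), if_pos h]
    · rw [if_neg (fun hcc => h (hc0.mp hcc)), if_neg h]
  rw [this]

/-- The value of the `d`-th power of the Gauss sum. -/
lemma gauss_pow (hF2 : ringChar F ≠ 2) (hχ : χ ≠ 1)
    (hq : Fintype.card F % 4 = 3) {d : ℕ} (hd : d % 4 = 2) :
    gaussSum (qc F) χ ^ d = -((Fintype.card F : ℂ)) ^ (d / 2) := by
  have hprim : χ.IsPrimitive := AddChar.IsPrimitive.of_ne_one hχ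
  have hsq : gaussSum (qc F) χ ^ 2 = qc F (-1) * (Fintype.card F : ℂ) :=
    gaussSum_sq (qc_ne_one hF2) qc_quad hprim
  have hneg : qc F (-1) = -1 := by
    rw [qc_apply]
    have : quadraticChar F (-1) = -1 := by
      rw [quadraticChar_neg_one_iff_not_isSquare, FiniteField.isSquare_neg_one_iff]
      simp [hq]
    rw [this]
    norm_num
  rw [hneg] at hsq
  have hd2 : d = 2 * (d / 2) := by omega
  have hodd2 : Odd (d / 2) := by
    rw [Nat.odd_iff]; omega
  calc gaussSum (qc F) χ ^ d = (gaussSum (qc F) χ ^ 2) ^ (d / 2) := by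
        rw [← pow_mul, ← hd2]
    _ = (-(Fintype.card F : ℂ)) ^ (d / 2) := by rw [hsq]; ring_nf
    _ = -((Fintype.card F : ℂ)) ^ (d / 2) := Odd.neg_pow hodd2 _

end Stmt13Aux

open Stmt13Aux

/-- Zero-radius sphere restriction: if `d ≡ 2 (mod 4)` and `q ≡ 3 (mod 4)`, then
`∑_{m ∈ S_0} |Â(m)|² ≤ q^{-d-1}|A| + q^{(-3d-2)/2}|A|²`. -/
theorem stmt_13 {F : Type} [Field F] [Fintype F] [DecidableEq F]
    (hodd : Odd (Fintype.card F)) (χ : AddChar F ℂ) (hχ : χ ≠ 1)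
    (d : ℕ) (hd : d % 4 = 2) (hq : Fintype.card F % 4 = 3)
    (A : Finset (Fin d → F)) :
    ∑ m ∈ univ.filter (fun m : Fin d → F => ∑ i, m i ^ 2 = 0),
        ‖ftSet χ A m‖ ^ 2
      ≤ (Fintype.card F : ℝ) ^ (-(d : ℝ) - 1) * A.card
        + (Fintype.card F : ℝ) ^ ((-3 * (d : ℝ) - 2) / 2) * (A.card : ℝ) ^ 2 := by
  classical
  have hF2 : ringChar F ≠ 2 := char_ne_two hodd
  set q : ℕ := Fintype.card F with hqdef
  have hqpos : 0 < q := Fintype.card_pos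
  have hq0 : (q : ℂ) ≠ 0 := Nat.cast_ne_zero.mpr (Nat.pos_iff_ne_zero.mp hqpos)
  have hq0R : (0 : ℝ) < q := by exact_mod_cast hqpos
  set k := d / 2 with hk
  have hdk : d = 2 * k := by omega
  have hd2 : d % 2 = 0 := by omega
  clear_value k
  have hp : 0 < ringChar F := by
    rcases CharP.char_is_prime_or_zero F (ringChar F) with h | h
    · exact h.pos
    · exact absurd h (CharP.char_ne_zero_of_finite F (ringChar F))
  have hconj : ∀ a : F, (starRingEnd ℂ) (χ a) = χ (-a) := fun a =>
    AddChar.starComp_apply hp a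
  set S := univ.filter (fun m : Fin d → F => ∑ i, m i ^ 2 = 0) with hS
  set G := gaussSum (qc F) χ with hG
  set N : ℕ := ∑ x ∈ A, ∑ y ∈ A, (if ∑ i, (y i - x i) ^ 2 = 0 then 1 else 0) with hN
  -- pointwise formula for |ft|^2 (as z * conj z)
  have hpoint : ∀ m : Fin d → F, ftSet χ A m * (starRingEnd ℂ) (ftSet χ A m)
      = ((q:ℂ)^d)⁻¹ * ((q:ℂ)^d)⁻¹ *
        ∑ x ∈ A, ∑ y ∈ A, χ (∑ i, m i * (y i - x i)) := by
    intro m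
    simp only [ftSet, map_mul, map_inv₀, map_pow, map_natCast, map_sum]
    have hc : ∀ x : Fin d → F,
        (starRingEnd ℂ) (χ (-(∑ i, m i * x i))) = χ (∑ i, m i * x i) := by
      intro x; rw [hconj, neg_neg]
    rw [Finset.sum_congr rfl fun x _ => hc x, mul_mul_mul_comm]
    congr 1
    rw [Finset.sum_mul_sum]
    refine Finset.sum_congr rfl fun x _ => Finset.sum_congr rfl fun y _ => ?_
    rw [← AddChar.map_add_eq_mul]
    congr 1
    have : ∑ i, m i * (y i - x i) = (∑ i, m i * y i) - ∑ i, m i * x i := by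
      rw [← Finset.sum_sub_distrib]
      exact Finset.sum_congr rfl fun i _ => by ring
    rw [this]; ring
  -- the key complex identity
  have key : ∑ m ∈ S, (ftSet χ A m * (starRingEnd ℂ) (ftSet χ A m))
      = ((q:ℂ) ^ (d+1))⁻¹ * A.card + ((q:ℂ) ^ (3*k+1))⁻¹ * (A.card : ℂ) ^ 2
        - ((q:ℂ) ^ (3*k))⁻¹ * N := by
    have swap : ∑ m ∈ S, (ftSet χ A m * (starRingEnd ℂ) (ftSet χ A m))
        = ((q:ℂ)^d)⁻¹ * ((q:ℂ)^d)⁻¹ *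
          ∑ x ∈ A, ∑ y ∈ A, ∑ m ∈ S, χ (∑ i, m i * (y i - x i)) := by
      rw [Finset.sum_congr rfl fun m _ => hpoint m, ← Finset.mul_sum]
      congr 1
      rw [Finset.sum_comm]
      exact Finset.sum_congr rfl fun x _ => Finset.sum_comm
    rw [swap]
    have hsphere : ∀ x ∈ A, ∀ y ∈ A, ∑ m ∈ S, χ (∑ i, m i * (y i - x i))
        = (q:ℂ)⁻¹ * ((if y = x then ((q:ℂ)) ^ d else 0)
          + G ^ d * ((if (∑ i, (y i - x i) ^ 2) = 0 then (q:ℂ) else 0) - 1)) := by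
      intro x _ y _
      have h := sphere_sum χ hF2 hχ hd2 (y - x)
      simp only [Pi.sub_apply, sub_eq_zero] at h
      rw [hS, h]
    rw [Finset.sum_congr rfl fun x hx =>
      Finset.sum_congr rfl fun y hy => hsphere x hx y hy]
    have expand : ∑ x ∈ A, ∑ y ∈ A, (q:ℂ)⁻¹ * ((if y = x then ((q:ℂ)) ^ d else 0)
          + G ^ d * ((if (∑ i, (y i - x i) ^ 2) = 0 then (q:ℂ) else 0) - 1))
        = (q:ℂ)⁻¹ * ((q:ℂ)^d * A.card + G ^ d * ((q:ℂ) * N - (A.card:ℂ)^2)) := by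
      have h1 : ∑ x ∈ A, ∑ y ∈ A, (if y = x then ((q:ℂ)) ^ d else 0)
          = (q:ℂ)^d * A.card := by
        rw [Finset.sum_congr rfl fun x hx => Finset.sum_ite_eq' A x (fun _ => ((q:ℂ))^d)]
        rw [Finset.sum_congr rfl fun x hx => if_pos hx, Finset.sum_const,
          nsmul_eq_mul, mul_comm]
      have h2 : ∑ x ∈ A, ∑ y ∈ A,
            (if (∑ i, (y i - x i) ^ 2) = 0 then (q:ℂ) else 0)
          = (q:ℂ) * N := by
        rw [hN]
        push_cast
        rw [Finset.mul_sum]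
        refine Finset.sum_congr rfl fun x _ => ?_
        rw [Finset.mul_sum]
        refine Finset.sum_congr rfl fun y _ => ?_
        split_ifs <;> simp
      have h3 : ∑ x ∈ A, ∑ y ∈ A, (1:ℂ) = (A.card : ℂ)^2 := by
        simp [Finset.sum_const, nsmul_eq_mul]
        ring
      have pointwise : ∀ x y : Fin d → F, (q:ℂ)⁻¹ * ((if y = x then ((q:ℂ)) ^ d else 0)
            + G ^ d * ((if (∑ i, (y i - x i) ^ 2) = 0 then (q:ℂ) else 0) - 1))
          = (q:ℂ)⁻¹ * (if y = x then ((q:ℂ)) ^ d else 0)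
            + ((q:ℂ)⁻¹ * G ^ d) * (if (∑ i, (y i - x i) ^ 2) = 0 then (q:ℂ) else 0)
            - (q:ℂ)⁻¹ * G ^ d := fun x y => by ring
      simp only [pointwise, Finset.sum_sub_distrib, Finset.sum_add_distrib,
        ← Finset.mul_sum, Finset.sum_const, nsmul_eq_mul]
      rw [h1, h2]
      ring
    rw [expand]
    have hGd : G ^ d = -((q:ℂ)) ^ k := by
      rw [hG, gauss_pow χ hF2 hχ hq hd, ← hk]
    rw [hGd]
    have p1 : ((q:ℂ))^d = ((q:ℂ))^(2*k) := by rw [hdk]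
    have p2 : ((q:ℂ))^(d+1) = ((q:ℂ))^(2*k+1) := by rw [hdk]
    rw [p1, p2]
    field_simp
    ring
  -- pass to real parts
  have habs : ((∑ m ∈ S, ‖ftSet χ A m‖ ^ 2 : ℝ) : ℂ)
      = ∑ m ∈ S, (ftSet χ A m * (starRingEnd ℂ) (ftSet χ A m)) := by
    rw [Complex.ofReal_sum]
    refine Finset.sum_congr rfl fun m _ => ?_
    rw [Complex.sq_norm, Complex.mul_conj]
  have hreal : ∑ m ∈ S, ‖ftSet χ A m‖ ^ 2
      = ((q:ℝ) ^ (d+1))⁻¹ * A.card + ((q:ℝ) ^ (3*k+1))⁻¹ * (A.card : ℝ) ^ 2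
        - ((q:ℝ) ^ (3*k))⁻¹ * N := by
    have h := habs.trans key
    have h2 : ((((q:ℝ) ^ (d+1))⁻¹ * A.card + ((q:ℝ) ^ (3*k+1))⁻¹ * (A.card : ℝ) ^ 2
        - ((q:ℝ) ^ (3*k))⁻¹ * N : ℝ) : ℂ)
        = ((q:ℂ) ^ (d+1))⁻¹ * A.card + ((q:ℂ) ^ (3*k+1))⁻¹ * (A.card : ℂ) ^ 2
        - ((q:ℂ) ^ (3*k))⁻¹ * N := by
      push_cast
      ring
    exact Complex.ofReal_injective (h.trans h2.symm)
  rw [hreal]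
  have e1 : (q:ℝ) ^ (-(d:ℝ) - 1) = ((q:ℝ)^(d+1))⁻¹ := by
    rw [show -(d:ℝ) - 1 = -(((d+1 : ℕ)):ℝ) by push_cast; ring,
      Real.rpow_neg hq0R.le, Real.rpow_natCast]
  have e2 : (q:ℝ) ^ ((-3*(d:ℝ)-2)/2) = ((q:ℝ)^(3*k+1))⁻¹ := by
    have hdr : (d:ℝ) = 2*k := by exact_mod_cast hdk
    rw [show (-3*(d:ℝ)-2)/2 = -(((3*k+1 : ℕ)):ℝ) by rw [hdr]; push_cast; ring,
      Real.rpow_neg hq0R.le, Real.rpow_natCast]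
  rw [e1, e2]
  have hNpos : (0:ℝ) ≤ ((q:ℝ)^(3*k))⁻¹ * N := by positivity
  linarith
end

section
/- Let E, F ⊆ F_q^d. For r ∈ F_q let ν(r) be the number of quadruples (e₁,f₁,e₂,f₂) ∈ E × F × E × F with ||e₁ − e₂|| + ||f₁ − f₂|| = r, and let μ(r) = #{(x,y) ∈ E × E : ||x − y|| = r}. Then Σ_r ν(r)² ≤ |E|⁴|F|⁴/q + q^d |F|² Σ_r μ(r)². -/
open Finset

/-- `||x - y|| = ∑ (x_i - y_i)²`. -/
def dist2 {K : Type} [Field K] {d : ℕ} (x y : Fin d → K) : K := ∑ i, (x i - y i) ^ 2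

section AuxLemmas

variable {K : Type} [Field K] [Fintype K] [DecidableEq K]

set_option linter.unusedSectionVars false

private lemma addchar_map_sum {M : Type*} [CommMonoid M] (ψ : AddChar K M)
    {ι : Type*} (s : Finset ι) (f : ι → K) :
    ψ (∑ i ∈ s, f i) = ∏ i ∈ s, ψ (f i) := by
  induction s using Finset.cons_induction with
  | empty => simp
  | cons a s ha ih => rw [Finset.sum_cons, Finset.prod_cons, AddChar.map_add_eq_mul, ih]

private lemma conj_char (ψ : AddChar K ℂ) (x : K) :
    (starRingEnd ℂ) (ψ x) = ψ (-x) := by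
  have h : 0 < ringChar K := Nat.pos_of_ne_zero (CharP.ringChar_ne_zero_of_finite K)
  rw [AddChar.starComp_apply h, AddChar.inv_apply]

private lemma pair_count {β : Type*} [DecidableEq β] (Q : Finset β) (v : β → K) :
    ∑ r : K, ((Q.filter (fun b => v b = r)).card : ℝ) ^ 2
      = (((Q ×ˢ Q).filter (fun p => v p.1 = v p.2)).card : ℝ) := by
  have hl : ∀ r : K, ((Q.filter (fun b => v b = r)).card : ℝ)
      = ∑ b ∈ Q, (if v b = r then (1:ℝ) else 0) := by
    intro r
    rw [Finset.card_filter]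
    push_cast
    rfl
  have hr : (((Q ×ˢ Q).filter (fun p => v p.1 = v p.2)).card : ℝ)
      = ∑ a ∈ Q, ∑ b ∈ Q, (if v a = v b then (1:ℝ) else 0) := by
    rw [Finset.card_filter]
    push_cast
    rw [Finset.sum_product]
  rw [hr]
  simp_rw [hl, sq, Finset.sum_mul_sum]
  rw [Finset.sum_comm]
  refine Finset.sum_congr rfl fun a _ => ?_
  rw [Finset.sum_comm]
  refine Finset.sum_congr rfl fun b _ => ?_
  simp_rw [ite_mul, one_mul, zero_mul]
  rw [Finset.sum_ite_eq univ (v a) (fun r => if v b = r then (1:ℝ) else 0)]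
  simp [eq_comm]

private lemma plancherel (ψ : AddChar K ℂ) (hψ : ψ.IsPrimitive)
    {β : Type*} [DecidableEq β] (Q : Finset β) (v : β → K) :
    ∑ ξ : K, (∑ b ∈ Q, ψ (ξ * v b)) * (starRingEnd ℂ) (∑ b ∈ Q, ψ (ξ * v b))
      = (Fintype.card K : ℂ) * (((Q ×ˢ Q).filter (fun p => v p.1 = v p.2)).card : ℂ) := by
  have step : ∀ ξ : K, (∑ b ∈ Q, ψ (ξ * v b)) * (starRingEnd ℂ) (∑ b ∈ Q, ψ (ξ * v b))
      = ∑ p ∈ Q ×ˢ Q, ψ ((v p.1 - v p.2) * ξ) := by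
    intro ξ
    rw [map_sum]
    simp_rw [conj_char]
    rw [Finset.sum_mul_sum]
    rw [Finset.sum_product]
    refine Finset.sum_congr rfl fun a _ => Finset.sum_congr rfl fun b _ => ?_
    rw [← AddChar.map_add_eq_mul]
    ring_nf
  simp_rw [step]
  rw [Finset.sum_comm]
  have inner : ∀ p : β × β, (∑ ξ : K, ψ ((v p.1 - v p.2) * ξ))
      = if v p.1 = v p.2 then (Fintype.card K : ℂ) else 0 := by
    intro p
    simp_rw [mul_comm (v p.1 - v p.2)]
    rw [AddChar.sum_mulShift _ hψ]
    simp [sub_eq_zero]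
  simp_rw [inner]
  rw [Finset.sum_ite, Finset.sum_const, Finset.sum_const_zero, add_zero, nsmul_eq_mul,
    mul_comm]

private lemma gauss_cell (ψ : AddChar K ℂ) (hψ : ψ.IsPrimitive) (h2 : (2:K) ≠ 0)
    {d : ℕ} {ξ : K} (hξ : ξ ≠ 0) (g₂ g₃ : Fin d → K) :
    (∑ x : Fin d → K, ψ (ξ * (dist2 x g₂ - dist2 x g₃)))
      = if g₂ = g₃ then ((Fintype.card K : ℂ)) ^ d else 0 := by
  split_ifs with h
  · subst h
    simp only [sub_self, mul_zero, AddChar.map_zero_eq_one]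
    rw [Finset.sum_const, Finset.card_univ, Fintype.card_fun, Fintype.card_fin]
    ring
  · obtain ⟨i₀, hi₀⟩ := Function.ne_iff.mp h
    have key : ∀ x : Fin d → K, ξ * (dist2 x g₂ - dist2 x g₃)
        = ∑ i : Fin d, (ξ * ((x i - g₂ i) ^ 2 - (x i - g₃ i) ^ 2)) := by
      intro x
      rw [dist2, dist2, ← Finset.sum_sub_distrib, Finset.mul_sum]
    simp_rw [key, addchar_map_sum]
    have swap : ∑ x : Fin d → K, ∏ i : Fin d, ψ (ξ * ((x i - g₂ i) ^ 2 - (x i - g₃ i) ^ 2))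
        = ∏ i : Fin d, ∑ y : K, ψ (ξ * ((y - g₂ i) ^ 2 - (y - g₃ i) ^ 2)) := by
      rw [Finset.prod_univ_sum]
      rw [Fintype.piFinset_univ]
    rw [swap]
    · refine Finset.prod_eq_zero (Finset.mem_univ i₀) ?_
      have expand : ∀ y : K, ξ * ((y - g₂ i₀) ^ 2 - (y - g₃ i₀) ^ 2)
          = y * (ξ * (2 * (g₃ i₀ - g₂ i₀))) + ξ * (g₂ i₀ ^ 2 - g₃ i₀ ^ 2) := by
        intro y; ring
      simp_rw [expand, AddChar.map_add_eq_mul]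
      rw [← Finset.sum_mul, AddChar.sum_mulShift _ hψ]
      have hc : ξ * (2 * (g₃ i₀ - g₂ i₀)) ≠ 0 :=
        mul_ne_zero hξ (mul_ne_zero h2 (sub_ne_zero_of_ne (Ne.symm hi₀)))
      rw [if_neg hc]; simp

private lemma key_bound (ψ : AddChar K ℂ) (hψ : ψ.IsPrimitive) (h2 : (2:K) ≠ 0)
    {d : ℕ} (G : Finset (Fin d → K)) {ξ : K} (hξ : ξ ≠ 0) :
    Complex.normSq (∑ p ∈ G ×ˢ G, ψ (ξ * dist2 p.1 p.2))
      ≤ (Fintype.card K : ℝ) ^ d * (G.card : ℝ) ^ 2 := by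
  set S : (Fin d → K) → ℂ := fun x => ∑ g ∈ G, ψ (ξ * dist2 x g) with hS
  have hsplit : (∑ p ∈ G ×ˢ G, ψ (ξ * dist2 p.1 p.2)) = ∑ g ∈ G, S g := by
    rw [Finset.sum_product]
  have hmass : ∑ x : Fin d → K, Complex.normSq (S x)
      = (Fintype.card K : ℝ) ^ d * (G.card : ℝ) := by
    have hC : ∑ x : Fin d → K, (Complex.normSq (S x) : ℂ)
        = ((Fintype.card K : ℝ) ^ d * (G.card : ℝ) : ℝ) := by
      simp_rw [← Complex.mul_conj]
      have expand : ∀ x : Fin d → K, S x * (starRingEnd ℂ) (S x)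
          = ∑ g₂ ∈ G, ∑ g₃ ∈ G, ψ (ξ * (dist2 x g₂ - dist2 x g₃)) := by
        intro x
        rw [hS, map_sum]
        simp_rw [conj_char]
        rw [Finset.sum_mul_sum]
        refine Finset.sum_congr rfl fun g₂ _ => Finset.sum_congr rfl fun g₃ _ => ?_
        rw [← AddChar.map_add_eq_mul]
        ring_nf
      simp_rw [expand]
      rw [Finset.sum_comm]
      have hg : ∀ g₂ ∈ G, (∑ x : Fin d → K, ∑ g₃ ∈ G, ψ (ξ * (dist2 x g₂ - dist2 x g₃)))
          = (Fintype.card K : ℂ) ^ d := by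
        intro g₂ hg₂
        rw [Finset.sum_comm]
        have : ∀ g₃ ∈ G, (∑ x : Fin d → K, ψ (ξ * (dist2 x g₂ - dist2 x g₃)))
            = if g₂ = g₃ then ((Fintype.card K : ℂ)) ^ d else 0 := by
          intro g₃ _
          exact gauss_cell ψ hψ h2 hξ g₂ g₃
        rw [Finset.sum_congr rfl this, Finset.sum_ite_eq G g₂ fun _ => (Fintype.card K : ℂ) ^ d,
          if_pos hg₂]
      rw [Finset.sum_congr rfl hg, Finset.sum_const, nsmul_eq_mul]
      push_cast
      ring
    have := hC
    push_cast at this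
    exact_mod_cast this
  have habs : ‖∑ g ∈ G, S g‖ ≤ ∑ g ∈ G, ‖S g‖ :=
    norm_sum_le _ _
  have hCS : (∑ g ∈ G, ‖S g‖) ^ 2
      ≤ (∑ g ∈ G, ‖S g‖ ^ 2) * (G.card : ℝ) := by
    have h := Finset.sum_mul_sq_le_sq_mul_sq G (fun g => ‖S g‖) (fun _ => 1)
    simpa using h
  have hsub : (∑ g ∈ G, ‖S g‖ ^ 2) ≤ (Fintype.card K : ℝ) ^ d * (G.card : ℝ) := by
    calc ∑ g ∈ G, ‖S g‖ ^ 2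
        ≤ ∑ x : Fin d → K, ‖S x‖ ^ 2 :=
          Finset.sum_le_sum_of_subset_of_nonneg (Finset.subset_univ G)
            (fun _ _ _ => by positivity)
      _ = _ := by simp_rw [Complex.sq_norm]; exact hmass
  calc Complex.normSq (∑ p ∈ G ×ˢ G, ψ (ξ * dist2 p.1 p.2))
      = ‖∑ g ∈ G, S g‖ ^ 2 := by rw [hsplit, Complex.sq_norm]
    _ ≤ (∑ g ∈ G, ‖S g‖) ^ 2 :=
        pow_le_pow_left₀ (norm_nonneg _) habs 2
    _ ≤ (∑ g ∈ G, ‖S g‖ ^ 2) * (G.card : ℝ) := hCS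
    _ ≤ ((Fintype.card K : ℝ) ^ d * (G.card : ℝ)) * (G.card : ℝ) :=
        mul_le_mul_of_nonneg_right hsub (by positivity)
    _ = (Fintype.card K : ℝ) ^ d * (G.card : ℝ) ^ 2 := by ring

end AuxLemmas

/-- For `E, F ⊆ F_q^d`, with `ν(r)` the number of quadruples
`(e₁,f₁,e₂,f₂) ∈ E × F × E × F` with `||e₁-e₂|| + ||f₁-f₂|| = r` and `μ(r)` the
number of pairs in `E × E` at distance `r`:
`∑_r ν(r)² ≤ |E|⁴|F|⁴/q + q^d |F|² ∑_r μ(r)²`. -/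
theorem stmt_16 {K : Type} [Field K] [Fintype K] [DecidableEq K]
    (hodd : Odd (Fintype.card K)) (d : ℕ) (hd : 1 ≤ d)
    (E G : Finset (Fin d → K)) :
    ∑ r : K,
        ((((E ×ˢ G) ×ˢ (E ×ˢ G)).filter
            (fun p => dist2 p.1.1 p.2.1 + dist2 p.1.2 p.2.2 = r)).card : ℝ) ^ 2
      ≤ (E.card : ℝ) ^ 4 * (G.card : ℝ) ^ 4 / (Fintype.card K : ℝ)
        + (Fintype.card K : ℝ) ^ d * (G.card : ℝ) ^ 2 *
            ∑ r : K, (((E ×ˢ E).filter (fun p => dist2 p.1 p.2 = r)).card : ℝ) ^ 2 := by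
  classical
  have hq0 : (0:ℝ) < (Fintype.card K : ℝ) := by exact_mod_cast Fintype.card_pos
  -- odd characteristic
  have h2 : (2:K) ≠ 0 := by
    intro h2eq
    have hchar : ringChar K = 2 := by
      haveI := ringChar.charP K
      have hdvd : ringChar K ∣ 2 := (CharP.cast_eq_zero_iff K (ringChar K) 2).mp h2eq
      rcases (Nat.prime_two.eq_one_or_self_of_dvd (ringChar K) hdvd) with h1 | h1
      · exact absurd h1 (CharP.ringChar_ne_one)
      · exact h1
    have := FiniteField.even_card_of_char_two hchar
    rw [Nat.odd_iff] at hodd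
    omega
  -- the primitive additive character
  set ψ := AddChar.FiniteField.primitiveChar_to_Complex K with hψdef
  have hψ : ψ.IsPrimitive := AddChar.FiniteField.primitiveChar_to_Complex_isPrimitive K
  -- Fourier transforms
  set F : K → ℂ := fun ξ => ∑ p ∈ E ×ˢ E, ψ (ξ * dist2 p.1 p.2) with hF
  set H : K → ℂ := fun ξ => ∑ p ∈ G ×ˢ G, ψ (ξ * dist2 p.1 p.2) with hH
  set J : K → ℂ := fun ξ => ∑ P ∈ (E ×ˢ G) ×ˢ (E ×ˢ G),
    ψ (ξ * (dist2 P.1.1 P.2.1 + dist2 P.1.2 P.2.2)) with hJ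
  -- J = F * H
  have hJFH : ∀ ξ : K, J ξ = F ξ * H ξ := by
    intro ξ
    have lhs : J ξ = ∑ e₁ ∈ E, ∑ g₁ ∈ G, ∑ e₂ ∈ E, ∑ g₂ ∈ G,
        ψ (ξ * dist2 e₁ e₂) * ψ (ξ * dist2 g₁ g₂) := by
      rw [hJ]
      simp only [Finset.sum_product]
      simp_rw [mul_add, AddChar.map_add_eq_mul]
    have rhs : F ξ * H ξ = ∑ e₁ ∈ E, ∑ e₂ ∈ E, ∑ g₁ ∈ G, ∑ g₂ ∈ G,
        ψ (ξ * dist2 e₁ e₂) * ψ (ξ * dist2 g₁ g₂) := by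
      rw [hF, hH, Finset.sum_mul_sum]
      simp only [Finset.sum_product]
    rw [lhs, rhs]
    exact Finset.sum_congr rfl fun e₁ _ => Finset.sum_comm
  -- Plancherel for ν
  have hPν := plancherel ψ hψ ((E ×ˢ G) ×ˢ (E ×ˢ G))
    (fun P => dist2 P.1.1 P.2.1 + dist2 P.1.2 P.2.2)
  have hPμ := plancherel ψ hψ (E ×ˢ E) (fun p => dist2 p.1 p.2)
  simp_rw [Complex.mul_conj] at hPν hPμ
  have hν : ∑ ξ : K, Complex.normSq (J ξ)
      = (Fintype.card K : ℝ) * ((((E ×ˢ G) ×ˢ (E ×ˢ G)) ×ˢ ((E ×ˢ G) ×ˢ (E ×ˢ G))).filter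
          (fun p => dist2 p.1.1.1 p.1.2.1 + dist2 p.1.1.2 p.1.2.2
            = dist2 p.2.1.1 p.2.2.1 + dist2 p.2.1.2 p.2.2.2)).card := by
    exact_mod_cast hPν
  have hμ : ∑ ξ : K, Complex.normSq (F ξ)
      = (Fintype.card K : ℝ) * (((E ×ˢ E) ×ˢ (E ×ˢ E)).filter
          (fun p => dist2 p.1.1 p.1.2 = dist2 p.2.1 p.2.2)).card := by
    exact_mod_cast hPμ
  -- the left-hand side via pair counting
  have hLHS : ∑ r : K, ((((E ×ˢ G) ×ˢ (E ×ˢ G)).filter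
        (fun p => dist2 p.1.1 p.2.1 + dist2 p.1.2 p.2.2 = r)).card : ℝ) ^ 2
      = ((((E ×ˢ G) ×ˢ (E ×ˢ G)) ×ˢ ((E ×ˢ G) ×ˢ (E ×ˢ G))).filter
          (fun p => dist2 p.1.1.1 p.1.2.1 + dist2 p.1.1.2 p.1.2.2
            = dist2 p.2.1.1 p.2.2.1 + dist2 p.2.1.2 p.2.2.2)).card :=
    pair_count ((E ×ˢ G) ×ˢ (E ×ˢ G)) (fun P => dist2 P.1.1 P.2.1 + dist2 P.1.2 P.2.2)
  have hMU : ∑ r : K, (((E ×ˢ E).filter (fun p => dist2 p.1 p.2 = r)).card : ℝ) ^ 2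
      = (((E ×ˢ E) ×ˢ (E ×ˢ E)).filter
          (fun p => dist2 p.1.1 p.1.2 = dist2 p.2.1 p.2.2)).card :=
    pair_count (E ×ˢ E) (fun p => dist2 p.1 p.2)
  -- values at 0
  have hF0 : Complex.normSq (F 0) = (E.card : ℝ) ^ 4 := by
    have h1 : F 0 = ((E.card * E.card : ℕ) : ℂ) := by
      rw [hF]
      simp only [zero_mul, AddChar.map_zero_eq_one]
      rw [Finset.sum_const, Finset.card_product, nsmul_eq_mul, mul_one]
    rw [h1, Complex.normSq_natCast]
    push_cast
    ring
  have hH0 : Complex.normSq (H 0) = (G.card : ℝ) ^ 4 := by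
    have h1 : H 0 = ((G.card * G.card : ℕ) : ℂ) := by
      rw [hH]
      simp only [zero_mul, AddChar.map_zero_eq_one]
      rw [Finset.sum_const, Finset.card_product, nsmul_eq_mul, mul_one]
    rw [h1, Complex.normSq_natCast]
    push_cast
    ring
  -- main estimate
  set B : ℝ := (Fintype.card K : ℝ) ^ d * (G.card : ℝ) ^ 2 with hB
  have hsplit : ∑ ξ : K, Complex.normSq (J ξ)
      = Complex.normSq (F 0) * Complex.normSq (H 0)
        + ∑ ξ ∈ Finset.univ.erase 0, Complex.normSq (F ξ) * Complex.normSq (H ξ) := by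
    simp_rw [hJFH, Complex.normSq_mul]
    rw [← Finset.add_sum_erase Finset.univ _ (Finset.mem_univ (0:K))]
  have herase : ∑ ξ ∈ Finset.univ.erase 0, Complex.normSq (F ξ) * Complex.normSq (H ξ)
      ≤ B * ∑ ξ : K, Complex.normSq (F ξ) := by
    calc ∑ ξ ∈ Finset.univ.erase 0, Complex.normSq (F ξ) * Complex.normSq (H ξ)
        ≤ ∑ ξ ∈ Finset.univ.erase 0, Complex.normSq (F ξ) * B := by
          refine Finset.sum_le_sum fun ξ hξ => ?_
          exact mul_le_mul_of_nonneg_left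
            (key_bound ψ hψ h2 G (Finset.ne_of_mem_erase hξ)) (Complex.normSq_nonneg _)
      _ = (∑ ξ ∈ Finset.univ.erase 0, Complex.normSq (F ξ)) * B := by
          rw [Finset.sum_mul]
      _ ≤ (∑ ξ : K, Complex.normSq (F ξ)) * B := by
          refine mul_le_mul_of_nonneg_right ?_ (by positivity)
          exact Finset.sum_le_sum_of_subset_of_nonneg (Finset.erase_subset _ _)
            (fun _ _ _ => Complex.normSq_nonneg _)
      _ = B * ∑ ξ : K, Complex.normSq (F ξ) := mul_comm _ _
  -- put everything together
  have hsum : ∑ ξ : K, Complex.normSq (F ξ)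
      = (Fintype.card K : ℝ) *
          ∑ r : K, (((E ×ˢ E).filter (fun p => dist2 p.1 p.2 = r)).card : ℝ) ^ 2 := by
    rw [hμ, hMU]
  have hqLHS : (Fintype.card K : ℝ) * (((((E ×ˢ G) ×ˢ (E ×ˢ G)) ×ˢ ((E ×ˢ G) ×ˢ (E ×ˢ G))).filter
        (fun p => dist2 p.1.1.1 p.1.2.1 + dist2 p.1.1.2 p.1.2.2
          = dist2 p.2.1.1 p.2.2.1 + dist2 p.2.1.2 p.2.2.2)).card : ℝ)
      ≤ (E.card : ℝ) ^ 4 * (G.card : ℝ) ^ 4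
        + B * ((Fintype.card K : ℝ) *
            ∑ r : K, (((E ×ˢ E).filter (fun p => dist2 p.1 p.2 = r)).card : ℝ) ^ 2) := by
    calc (Fintype.card K : ℝ) * _ = ∑ ξ : K, Complex.normSq (J ξ) := hν.symm
      _ = Complex.normSq (F 0) * Complex.normSq (H 0)
          + ∑ ξ ∈ Finset.univ.erase 0, Complex.normSq (F ξ) * Complex.normSq (H ξ) := hsplit
      _ ≤ Complex.normSq (F 0) * Complex.normSq (H 0)
          + B * ∑ ξ : K, Complex.normSq (F ξ) := add_le_add_right herase _
      _ = (E.card : ℝ) ^ 4 * (G.card : ℝ) ^ 4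
          + B * ((Fintype.card K : ℝ) *
            ∑ r : K, (((E ×ˢ E).filter (fun p => dist2 p.1 p.2 = r)).card : ℝ) ^ 2) := by
        rw [hF0, hH0, hsum]
  rw [hLHS]
  set X : ℝ := (((((E ×ˢ G) ×ˢ (E ×ˢ G)) ×ˢ ((E ×ˢ G) ×ˢ (E ×ˢ G))).filter
        (fun p => dist2 p.1.1.1 p.1.2.1 + dist2 p.1.1.2 p.1.2.2
          = dist2 p.2.1.1 p.2.2.1 + dist2 p.2.1.2 p.2.2.2)).card : ℝ) with hX
  set S : ℝ := ∑ r : K, (((E ×ˢ E).filter (fun p => dist2 p.1 p.2 = r)).card : ℝ) ^ 2 with hSdef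
  have hfinal : X ≤ ((E.card : ℝ) ^ 4 * (G.card : ℝ) ^ 4
      + B * ((Fintype.card K : ℝ) * S)) / (Fintype.card K : ℝ) := by
    rw [le_div_iff₀ hq0]
    linarith [hqLHS]
  calc X ≤ ((E.card : ℝ) ^ 4 * (G.card : ℝ) ^ 4
      + B * ((Fintype.card K : ℝ) * S)) / (Fintype.card K : ℝ) := hfinal
    _ = (E.card : ℝ) ^ 4 * (G.card : ℝ) ^ 4 / (Fintype.card K : ℝ) + B * S := by
      field_simp
end
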